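/- If u ≤ v in the right weak order on S_n (i.e., Inv(u) ⊆ Inv(v), where Inv(σ) is the set of pairs (j,i) with j > i and σ⁻¹(j) < σ⁻¹(i)), and I is an interval in {1,...,n}, then st(u|I) ≤ st(v|I), where u|I denotes the word obtained from the one-line notation of u by deleting letters not in I, and st denotes standardization. -/

import Mathlib

/-- Standardization (0-based): replace each letter by its rank among the letters of `w`. -/
def stW (w : List ℕ) : List ℕ := w.map (fun x => (w.filter (· < x)).length)

/-- `w` is the one-line word of a permutation of `{0, …, n-1}` where `n = w.length`. -/
def IsPermWord (w : List ℕ) : Prop := w.Perm (List.range w.length)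

/-- The inversion set of a word: pairs `(j, i)` with `j > i` and `j` to the left of `i`. -/
def invSet (w : List ℕ) : Set (ℕ × ℕ) :=
  {p | p.2 < p.1 ∧ ∃ k l : ℕ, k < l ∧ w[k]? = some p.1 ∧ w[l]? = some p.2}

/-- The right weak order: inclusion of inversion sets. -/
def weakLe (u v : List ℕ) : Prop := invSet u ⊆ invSet v

/-- Left shifted concatenation `v △ u`: the word `v̄ u`, `v̄` being `v` shifted by `|u|`. -/
def triangle (v u : List ℕ) : List ℕ := v.map (· + u.length) ++ u

/-- Right shifted concatenation `u □ v`: the word `u v̄`, `v̄` being `v` shifted by `|u|`. -/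
def squareC (u v : List ℕ) : List ℕ := u ++ v.map (· + u.length)


lemma aux_idxOf_filter (p : ℕ → Bool) :
    ∀ (w : List ℕ) {j i : ℕ}, j ≠ i → p j = true → p i = true →
    w.idxOf j < w.idxOf i → (w.filter p).idxOf j < (w.filter p).idxOf i := by
  intro w
  induction w with
  | nil => intro j i _ _ _ h; simp [List.idxOf_nil] at h
  | cons a t ih =>
    intro j i hji hpj hpi h
    rcases eq_or_ne a j with rfl | haj
    · rw [List.filter_cons_of_pos hpj]
      simp only [List.idxOf_cons, beq_self_eq_true, cond_true]
      have h2 : (a == i) = false := by simp [hji]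
      simp [h2]
    · rcases eq_or_ne a i with rfl | hai
      · exfalso
        have h2 : (a == j) = false := by simp [haj]
        simp [List.idxOf_cons, h2] at h
      · have haj' : (a == j) = false := by simp [haj]
        have hai' : (a == i) = false := by simp [hai]
        have h' : t.idxOf j < t.idxOf i := by
          simpa [List.idxOf_cons, haj', hai'] using h
        by_cases hpa : p a
        · rw [List.filter_cons_of_pos hpa]
          simpa [List.idxOf_cons, haj', hai'] using ih hji hpj hpi h'
        · rw [List.filter_cons_of_neg hpa]
          exact ih hji hpj hpi h'

lemma aux_idxOf_filter_rev (p : ℕ → Bool) {w : List ℕ} {j i : ℕ}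
    (hj : j ∈ w.filter p) (hi : i ∈ w.filter p)
    (h : (w.filter p).idxOf j < (w.filter p).idxOf i) :
    w.idxOf j < w.idxOf i := by
  have hji : j ≠ i := by rintro rfl; exact lt_irrefl _ h
  have hjw : j ∈ w := (List.mem_filter.mp hj).1
  have hiw : i ∈ w := (List.mem_filter.mp hi).1
  rcases lt_trichotomy (w.idxOf j) (w.idxOf i) with h' | h' | h'
  · exact h'
  · exact absurd ((List.idxOf_inj hjw).mp h') hji
  · exact absurd (aux_idxOf_filter p w (Ne.symm hji) (List.mem_filter.mp hi).2
      (List.mem_filter.mp hj).2 h') (Nat.lt_asymm h)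

lemma mem_invSet_iff {w : List ℕ} (hw : w.Nodup) {j i : ℕ} :
    (j, i) ∈ invSet w ↔ i < j ∧ j ∈ w ∧ i ∈ w ∧ w.idxOf j < w.idxOf i := by
  constructor
  · rintro ⟨hlt, k, l, hkl, hk, hl⟩
    have hk' : w[k]? = some j := hk
    have hl' : w[l]? = some i := hl
    obtain ⟨hk1, hk2⟩ := List.getElem?_eq_some_iff.mp hk'
    obtain ⟨hl1, hl2⟩ := List.getElem?_eq_some_iff.mp hl'
    have hjm : j ∈ w := hk2 ▸ List.getElem_mem hk1
    have him : i ∈ w := hl2 ▸ List.getElem_mem hl1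
    refine ⟨hlt, hjm, him, ?_⟩
    have e1 : w.idxOf j = k := by
      have g1 := List.getElem_idxOf (List.idxOf_lt_length_iff.mpr hjm)
      exact hw.getElem_inj_iff.mp (g1.trans hk2.symm)
    have e2 : w.idxOf i = l := by
      have g1 := List.getElem_idxOf (List.idxOf_lt_length_iff.mpr him)
      exact hw.getElem_inj_iff.mp (g1.trans hl2.symm)
    rw [e1, e2]; exact hkl
  · rintro ⟨hlt, hjm, him, hidx⟩
    exact ⟨hlt, w.idxOf j, w.idxOf i, hidx,
      List.getElem?_eq_some_iff.mpr ⟨List.idxOf_lt_length_iff.mpr hjm, List.getElem_idxOf _⟩,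
      List.getElem?_eq_some_iff.mpr ⟨List.idxOf_lt_length_iff.mpr him, List.getElem_idxOf _⟩⟩

lemma rank_strictMono (L : List ℕ) {a b : ℕ} (haL : a ∈ L) (hab : a < b) :
    (L.filter (· < a)).length < (L.filter (· < b)).length := by
  have hperm := List.perm_cons_erase haL
  rw [← List.countP_eq_length_filter, ← List.countP_eq_length_filter,
    hperm.countP_eq, hperm.countP_eq,
    List.countP_cons_of_neg (by simp), List.countP_cons_of_pos (by simpa using hab)]
  exact Nat.lt_succ_of_le (List.countP_mono_left
    (by intro x _ hx; simp only [decide_eq_true_eq] at hx ⊢; omega))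

/-- If `u ≤ v` in the right weak order on `S_n` and `I` is an
interval in `{0,…,n-1}`, then `st(u|I) ≤ st(v|I)`. -/
theorem st_restrict_mono_weakLe (n : ℕ) (u v : List ℕ)
    (hu : IsPermWord u) (hv : IsPermWord v)
    (hun : u.length = n) (hvn : v.length = n)
    (I : Finset ℕ) (hIn : I ⊆ Finset.range n)
    (hI : ∀ a b c : ℕ, a ∈ I → c ∈ I → a ≤ b → b ≤ c → b ∈ I)
    (huv : weakLe u v) :
    weakLe (stW (u.filter (· ∈ I))) (stW (v.filter (· ∈ I))) := by
  classical
  have hu' : u.Perm (List.range n) := hun ▸ hu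
  have hv' : v.Perm (List.range n) := hvn ▸ hv
  have hnu : u.Nodup := hu'.nodup_iff.mpr List.nodup_range
  have hnv : v.Nodup := hv'.nodup_iff.mpr List.nodup_range
  have hnwu : (u.filter (· ∈ I)).Nodup := hnu.filter _
  have hnwv : (v.filter (· ∈ I)).Nodup := hnv.filter _
  have hpu : (u.filter (· ∈ I)).Perm ((List.range n).filter (· ∈ I)) := hu'.filter _
  have hpv : (v.filter (· ∈ I)).Perm ((List.range n).filter (· ∈ I)) := hv'.filter _
  have hstu : stW (u.filter (· ∈ I)) = (u.filter (· ∈ I)).map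
      (fun x => (((List.range n).filter (· ∈ I)).filter (· < x)).length) := by
    unfold stW
    apply List.map_congr_left
    intro x _
    exact (hpu.filter (· < x)).length_eq
  have hstv : stW (v.filter (· ∈ I)) = (v.filter (· ∈ I)).map
      (fun x => (((List.range n).filter (· ∈ I)).filter (· < x)).length) := by
    unfold stW
    apply List.map_congr_left
    intro x _
    exact (hpv.filter (· < x)).length_eq
  rintro ⟨J, K⟩ hmem
  rw [hstu] at hmem
  obtain ⟨hKJ, k, l, hkl, hk, hl⟩ := hmem
  have hKJ' : K < J := hKJ
  have hk' : ((u.filter (· ∈ I)).map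
      (fun x => (((List.range n).filter (· ∈ I)).filter (· < x)).length))[k]? = some J := hk
  have hl' : ((u.filter (· ∈ I)).map
      (fun x => (((List.range n).filter (· ∈ I)).filter (· < x)).length))[l]? = some K := hl
  rw [List.getElem?_map] at hk' hl'
  obtain ⟨j', hj'1, hj'2⟩ := Option.map_eq_some_iff.mp hk'
  obtain ⟨i', hi'1, hi'2⟩ := Option.map_eq_some_iff.mp hl'
  have hj'wu : j' ∈ u.filter (· ∈ I) := by
    obtain ⟨h1, h2⟩ := List.getElem?_eq_some_iff.mp hj'1
    exact h2 ▸ List.getElem_mem h1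
  have hi'wu : i' ∈ u.filter (· ∈ I) := by
    obtain ⟨h1, h2⟩ := List.getElem?_eq_some_iff.mp hi'1
    exact h2 ▸ List.getElem_mem h1
  have hj'u : j' ∈ u := (List.mem_filter.mp hj'wu).1
  have hi'u : i' ∈ u := (List.mem_filter.mp hi'wu).1
  have hj'I : j' ∈ I := by simpa using (List.mem_filter.mp hj'wu).2
  have hi'I : i' ∈ I := by simpa using (List.mem_filter.mp hi'wu).2
  have hj'L : j' ∈ (List.range n).filter (· ∈ I) := hpu.mem_iff.mp hj'wu
  have hi'L : i' ∈ (List.range n).filter (· ∈ I) := hpu.mem_iff.mp hi'wu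
  have hij : i' < j' := by
    rcases lt_trichotomy i' j' with h | h | h
    · exact h
    · subst h
      rw [hj'2] at hi'2
      omega
    · have := rank_strictMono _ hj'L h
      omega
  have hinv_wu : ((j', i') : ℕ × ℕ) ∈ invSet (u.filter (· ∈ I)) :=
    ⟨hij, k, l, hkl, hj'1, hi'1⟩
  obtain ⟨_, _, _, hidx_wu⟩ := (mem_invSet_iff hnwu).mp hinv_wu
  have hidx_u : u.idxOf j' < u.idxOf i' :=
    aux_idxOf_filter_rev _ hj'wu hi'wu hidx_wu
  have hinv_u : ((j', i') : ℕ × ℕ) ∈ invSet u :=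
    (mem_invSet_iff hnu).mpr ⟨hij, hj'u, hi'u, hidx_u⟩
  have hinv_v : ((j', i') : ℕ × ℕ) ∈ invSet v := huv hinv_u
  obtain ⟨_, hj'v, hi'v, hidx_v⟩ := (mem_invSet_iff hnv).mp hinv_v
  have hidx_wv : (v.filter (· ∈ I)).idxOf j' < (v.filter (· ∈ I)).idxOf i' :=
    aux_idxOf_filter _ v hij.ne' (by simpa using hj'I) (by simpa using hi'I) hidx_v
  have hj'wv : j' ∈ v.filter (· ∈ I) := List.mem_filter.mpr ⟨hj'v, by simpa using hj'I⟩
  have hi'wv : i' ∈ v.filter (· ∈ I) := List.mem_filter.mpr ⟨hi'v, by simpa using hi'I⟩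
  have hinv_wv : ((j', i') : ℕ × ℕ) ∈ invSet (v.filter (· ∈ I)) :=
    (mem_invSet_iff hnwv).mpr ⟨hij, hj'wv, hi'wv, hidx_wv⟩
  obtain ⟨_, k2, l2, hk2l2, hk2, hl2⟩ := hinv_wv
  rw [hstv]
  refine ⟨hKJ', k2, l2, hk2l2, ?_, ?_⟩
  · show ((v.filter (· ∈ I)).map
      (fun x => (((List.range n).filter (· ∈ I)).filter (· < x)).length))[k2]? = some J
    rw [List.getElem?_map, show (v.filter (· ∈ I))[k2]? = some j' from hk2]
    rw [Option.map_some]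
    exact congrArg some hj'2
  · show ((v.filter (· ∈ I)).map
      (fun x => (((List.range n).filter (· ∈ I)).filter (· < x)).length))[l2]? = some K
    rw [List.getElem?_map, show (v.filter (· ∈ I))[l2]? = some i' from hl2]
    rw [Option.map_some]
    exact congrArg some hi'2
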